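/- Fix an integer k ≥ 3 and set γ_k := 1/2 − 1/k. Every solution ζ : (0,1) → ℝ of the linear ODE −(1/2)(u^{−1} − u) ζ′(u) − (4γ_k + u^{−2}) ζ(u) = u^{−6}(1 − u²)^{4γ_k} has the asymptotic behavior ζ(u) = u^{−4} + O(u^{−2} log(1/u)) as u ↘ 0 and ζ(u) = −(1 − u²)^{4γ_k} + O((1 − u²)^{4γ_k + 1} |log(1 − u²)|) as u ↗ 1. -/

import Mathlib

open Topology Filter Asymptotics Set

/-- `γ_k = 1/2 - 1/k`. -/
noncomputable def gam (k : ℕ) : ℝ := 1/2 - 1/(k:ℝ)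

noncomputable def Vf : ℝ → ℝ := fun u =>
  (u^2)⁻¹ - (1-u^2)⁻¹ - 4*Real.log u + 2*Real.log (1-u^2)

lemma aux_key (b : ℝ) (ζ ζ' : ℝ → ℝ)
    (hderiv : ∀ u ∈ Set.Ioo (0:ℝ) 1, HasDerivAt ζ (ζ' u) u)
    (hode : ∀ u ∈ Set.Ioo (0:ℝ) 1,
      -(1/2) * ((1-u^2)/u) * ζ' u - (b + (u^2)⁻¹) * ζ u
        = (u^6)⁻¹ * (1 - u^2) ^ b) :
    ∀ u ∈ Set.Ioo (0:ℝ) 1,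
      HasDerivAt (fun x => ζ x * (x^2 * (1-x^2) ^ (-(1+b))) - Vf x) 0 u := by
  rintro u ⟨hu0, hu1⟩
  have hw : 0 < 1 - u^2 := by nlinarith
  have hune : u ≠ 0 := ne_of_gt hu0
  have hwne : (1:ℝ) - u^2 ≠ 0 := ne_of_gt hw
  have hA : HasDerivAt (fun x : ℝ => 1 - x^2) (-(2*u)) u := by
    simpa using (hasDerivAt_pow 2 u).const_sub 1
  have hrpow : HasDerivAt (fun x : ℝ => (1 - x^2) ^ (-(1+b)))
      (-(2*u) * (-(1+b)) * (1-u^2) ^ (-(1+b) - 1)) u := hA.rpow_const (Or.inl hwne)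
  have hpow : HasDerivAt (fun x : ℝ => x^2) (2*u) u := by simpa using hasDerivAt_pow 2 u
  have hG : HasDerivAt (fun x : ℝ => x^2 * (1-x^2) ^ (-(1+b)))
      (2*u * (1-u^2) ^ (-(1+b)) + u^2 * (-(2*u) * (-(1+b)) * (1-u^2) ^ (-(1+b) - 1))) u :=
    hpow.mul hrpow
  have hFd : HasDerivAt (fun x => ζ x * (x^2 * (1-x^2) ^ (-(1+b))))
      (ζ' u * (u^2 * (1-u^2) ^ (-(1+b))) +
        ζ u * (2*u * (1-u^2) ^ (-(1+b)) + u^2 * (-(2*u) * (-(1+b)) * (1-u^2) ^ (-(1+b) - 1)))) u :=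
    (hderiv u ⟨hu0, hu1⟩).mul hG
  have h1 : HasDerivAt (fun x : ℝ => (x^2)⁻¹) (-(2*u) / (u^2)^2) u :=
    hpow.inv (pow_ne_zero 2 hune)
  have h2 : HasDerivAt (fun x : ℝ => (1-x^2)⁻¹) (-(-(2*u)) / (1-u^2)^2) u := hA.inv hwne
  have h3 : HasDerivAt (fun x : ℝ => 4 * Real.log x) (4 * u⁻¹) u :=
    (Real.hasDerivAt_log hune).const_mul 4
  have h4 : HasDerivAt (fun x : ℝ => 2 * Real.log (1-x^2)) (2 * (-(2*u) / (1-u^2))) u :=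
    (hA.log hwne).const_mul 2
  have hVd : HasDerivAt Vf
      (-(2*u) / (u^2)^2 - -(-(2*u)) / (1-u^2)^2 - 4 * u⁻¹ + 2 * (-(2*u) / (1-u^2))) u :=
    ((h1.sub h2).sub h3).add h4
  have hFV := hFd.sub hVd
  -- now show the derivative is 0
  set A := (1-u^2) ^ b with hAdef
  have hApos : 0 < A := Real.rpow_pos_of_pos hw b
  have e1 : (1-u^2) ^ (-(1+b)) = ((1-u^2) * A)⁻¹ := by
    rw [Real.rpow_neg hw.le, Real.rpow_add hw, Real.rpow_one]
  have e2 : (1-u^2) ^ (-(1+b) - 1) = ((1-u^2)^2 * A)⁻¹ := by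
    rw [show -(1+b) - 1 = -((1+1) + b) by ring, Real.rpow_neg hw.le, Real.rpow_add hw,
      Real.rpow_add hw, Real.rpow_one]
    ring_nf
    rw [hAdef]
  have hode' := hode u ⟨hu0, hu1⟩
  have hz : ζ' u = (-(2*u)/(1-u^2)) * ((b + (u^2)⁻¹) * ζ u + (u^6)⁻¹ * A) := by
    rw [← hAdef] at hode'
    field_simp at hode' ⊢
    nlinarith [hode', sq_nonneg u]
  have hd0 : (ζ' u * (u^2 * (1-u^2) ^ (-(1+b))) +
        ζ u * (2*u * (1-u^2) ^ (-(1+b)) + u^2 * (-(2*u) * (-(1+b)) * (1-u^2) ^ (-(1+b) - 1)))) -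
      (-(2*u) / (u^2)^2 - -(-(2*u)) / (1-u^2)^2 - 4 * u⁻¹ + 2 * (-(2*u) / (1-u^2))) = 0 := by
    rw [e1, e2, hz]
    field_simp
    ring
  exact hd0 ▸ hFV

lemma aux_rep (b : ℝ) (ζ ζ' : ℝ → ℝ)
    (hderiv : ∀ u ∈ Set.Ioo (0:ℝ) 1, HasDerivAt ζ (ζ' u) u)
    (hode : ∀ u ∈ Set.Ioo (0:ℝ) 1,
      -(1/2) * ((1-u^2)/u) * ζ' u - (b + (u^2)⁻¹) * ζ u
        = (u^6)⁻¹ * (1 - u^2) ^ b) :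
    ∃ c : ℝ, ∀ u ∈ Set.Ioo (0:ℝ) 1,
      ζ u = (Vf u + c) * ((u^2)⁻¹ * (1-u^2) ^ (1+b)) := by
  have key := aux_key b ζ ζ' hderiv hode
  set g : ℝ → ℝ := fun x => ζ x * (x^2 * (1-x^2) ^ (-(1+b))) - Vf x with hg
  have hconst : ∀ u ∈ Set.Ioo (0:ℝ) 1, g u = g (1/2) := by
    intro u hu
    have hdiff : DifferentiableOn ℝ g (Set.Ioo 0 1) := fun x hx =>
      ((key x hx).differentiableAt).differentiableWithinAt
    have h12 : (1/2:ℝ) ∈ Set.Ioo (0:ℝ) 1 := by norm_num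
    exact (convex_Ioo (0:ℝ) 1).is_const_of_fderivWithin_eq_zero hdiff
      (fun x hx => by
        have h0 : HasFDerivAt g (0 : ℝ →L[ℝ] ℝ) x := by
          have := (key x hx).hasFDerivAt
          exact this.congr_fderiv (by ext y; simp)
        rw [fderivWithin_of_isOpen isOpen_Ioo hx, h0.fderiv]) hu h12
  obtain ⟨c, hc⟩ : ∃ c, ∀ u ∈ Set.Ioo (0:ℝ) 1, g u = c := ⟨g (1/2), hconst⟩
  refine ⟨c, fun u hu => ?_⟩
  obtain ⟨hu0, hu1⟩ := hu
  have hw : 0 < 1 - u^2 := by nlinarith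
  have hune : (u:ℝ)^2 ≠ 0 := pow_ne_zero 2 (ne_of_gt hu0)
  have hP : 0 < (1-u^2) ^ (1+b) := Real.rpow_pos_of_pos hw _
  have e1 : (1-u^2) ^ (-(1+b)) = ((1-u^2) ^ (1+b))⁻¹ := Real.rpow_neg hw.le _
  have h := hc u ⟨hu0, hu1⟩
  have h' : ζ u * (u^2 * (1-u^2) ^ (-(1+b))) = Vf u + c := by
    simp only [hg] at h; linarith
  rw [e1] at h'
  field_simp at h' ⊢
  linarith


set_option maxHeartbeats 1000000 in
/-- every solution `ζ` of the linear ODE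
`-(1/2)(u⁻¹ - u) ζ' - (4γ_k + u⁻²) ζ = u⁻⁶ (1-u²)^{4γ_k}` on `(0,1)`
satisfies `ζ(u) = u⁻⁴ + O(u⁻² log(1/u))` as `u ↘ 0` and
`ζ(u) = -(1-u²)^{4γ_k} + O((1-u²)^{4γ_k+1}|log(1-u²)|)` as `u ↗ 1`. -/
theorem stmt2 (k : ℕ) (hk : 3 ≤ k) (ζ ζ' : ℝ → ℝ)
    (hderiv : ∀ u ∈ Set.Ioo (0:ℝ) 1, HasDerivAt ζ (ζ' u) u)
    (hode : ∀ u ∈ Set.Ioo (0:ℝ) 1,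
      -(1/2) * (u⁻¹ - u) * ζ' u - (4 * gam k + u ^ (-2:ℝ)) * ζ u
        = u ^ (-6:ℝ) * (1 - u^2) ^ (4 * gam k)) :
    ((fun u => ζ u - u ^ (-4:ℝ)) =O[𝓝[>] (0:ℝ)]
        fun u => u ^ (-2:ℝ) * Real.log (1/u)) ∧
    ((fun u => ζ u + (1 - u^2) ^ (4 * gam k)) =O[𝓝[<] (1:ℝ)]
        fun u => (1 - u^2) ^ (4 * gam k + 1) * |Real.log (1 - u^2)|) := by
  set b : ℝ := 4 * gam k with hbdef
  have hk3 : (3:ℝ) ≤ (k:ℝ) := by exact_mod_cast hk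
  have hkinv : 1/(k:ℝ) ≤ 1/3 := by
    rw [div_le_div_iff₀ (by linarith) (by norm_num)]; linarith
  have hkinv0 : 0 < 1/(k:ℝ) := by positivity
  have hb0 : (0:ℝ) ≤ b := by rw [hbdef]; unfold gam; linarith
  have hb2 : b ≤ 2 := by rw [hbdef]; unfold gam; linarith
  -- rpow → field conversions
  have hrn : ∀ (x : ℝ), 0 < x → ∀ n : ℕ, x ^ (-(n:ℝ)) = (x^n)⁻¹ := by
    intro x hx n
    rw [Real.rpow_neg hx.le, Real.rpow_natCast]
  -- ODE in field form
  have hode' : ∀ u ∈ Set.Ioo (0:ℝ) 1,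
      -(1/2) * ((1-u^2)/u) * ζ' u - (b + (u^2)⁻¹) * ζ u
        = (u^6)⁻¹ * (1 - u^2) ^ b := by
    rintro u ⟨hu0, hu1⟩
    have h := hode u ⟨hu0, hu1⟩
    rw [show (-2:ℝ) = -((2:ℕ):ℝ) by norm_num, show (-6:ℝ) = -((6:ℕ):ℝ) by norm_num,
      hrn u hu0, hrn u hu0] at h
    rw [show u⁻¹ - u = (1-u^2)/u by field_simp] at h
    exact h
  obtain ⟨c, hrep⟩ := aux_rep b ζ ζ' hderiv hode'
  constructor
  · rw [Asymptotics.isBigO_iff]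
    refine ⟨11 + |c|, ?_⟩
    filter_upwards [Ioo_mem_nhdsGT_of_mem
      (show (0:ℝ) ∈ Set.Ico (0:ℝ) (1/4) by norm_num)] with u hu
    obtain ⟨hu0, hu14⟩ := hu
    have hu1 : u < 1 := by linarith
    have hu2 : u^2 < 1/16 := by nlinarith
    have hwlb : (15:ℝ)/16 < 1 - u^2 := by linarith
    have hwpos : (0:ℝ) < 1 - u^2 := by linarith
    have hw1 : 1 - u^2 ≤ 1 := by nlinarith
    have hX0 : (0:ℝ) < (u^2)⁻¹ := by positivity
    have hXu : (u^2) * (u^2)⁻¹ = 1 := mul_inv_cancel₀ (by positivity)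
    have hP0 : 0 < (1-u^2) ^ (1+b) := Real.rpow_pos_of_pos hwpos _
    have hP1 : (1-u^2) ^ (1+b) ≤ 1 := Real.rpow_le_one hwpos.le hw1 (by linarith)
    have hPlb : 1 - 3*u^2 ≤ (1-u^2) ^ (1+b) := by
      have h := one_add_mul_self_le_rpow_one_add
        (show (-1:ℝ) ≤ -u^2 by nlinarith) (show (1:ℝ) ≤ 1+b by linarith)
      rw [show (1:ℝ) + -u^2 = 1 - u^2 by ring] at h
      nlinarith [sq_nonneg u]
    -- log facts
    have hLdef : Real.log (1/u) = -Real.log u := by rw [one_div, Real.log_inv]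
    have hL1 : 1 ≤ Real.log (1/u) := by
      have h4u : (4:ℝ) ≤ 1/u := by rw [le_div_iff₀ hu0]; linarith
      have hm : Real.log 4 ≤ Real.log (1/u) := Real.log_le_log (by norm_num) h4u
      have h4 : Real.log (4:ℝ) = 2 * Real.log 2 := by
        rw [show (4:ℝ) = 2^2 by norm_num, Real.log_pow]; push_cast; ring
      nlinarith [Real.log_two_gt_d9]
    have hlogw_le : Real.log (1-u^2) ≤ 0 := Real.log_nonpos hwpos.le hw1
    have hwinv2 : (1-u^2)⁻¹ ≤ 2 := by
      nlinarith [mul_inv_cancel₀ (ne_of_gt hwpos), inv_pos.mpr hwpos]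
    have hwinv0 : 0 < (1-u^2)⁻¹ := inv_pos.mpr hwpos
    have hlogw_ge : -1 ≤ Real.log (1-u^2) := by
      have h := Real.log_le_sub_one_of_pos hwinv0
      rw [Real.log_inv] at h
      linarith
    -- main computation
    have e4 : u ^ (-4:ℝ) = (u^2)⁻¹ * (u^2)⁻¹ := by
      rw [show (-4:ℝ) = -((4:ℕ):ℝ) by norm_num, hrn u hu0,
        show u^4 = u^2 * u^2 by ring, mul_inv]
    have e2r : u ^ (-2:ℝ) = (u^2)⁻¹ := by
      rw [show (-2:ℝ) = -((2:ℕ):ℝ) by norm_num, hrn u hu0]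
    have key1 : ζ u - u ^ (-4:ℝ) =
        (u^2)⁻¹ * ((Vf u + c) * ((1-u^2) ^ (1+b)) - (u^2)⁻¹) := by
      rw [hrep u ⟨hu0, hu1⟩, e4]; ring
    set P := (1-u^2) ^ (1+b) with hPdef
    set S : ℝ := -(1-u^2)⁻¹ + 2*Real.log (1-u^2) - 4*Real.log u + c with hSdef
    have hEdecomp : (Vf u + c) * P - (u^2)⁻¹ = ((u^2)⁻¹*P - (u^2)⁻¹) + P * S := by
      simp only [Vf, hSdef]; ring
    have hT1 : |(u^2)⁻¹*P - (u^2)⁻¹| ≤ 3 := by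
      rw [abs_le]
      constructor
      · nlinarith [mul_le_mul_of_nonneg_left (show 1 - P ≤ 3*u^2 by linarith) hX0.le]
      · nlinarith [mul_le_mul_of_nonneg_left hP1 hX0.le]
    have hS : |S| ≤ 4 + |c| + 4*Real.log (1/u) := by
      rw [abs_le]
      constructor
      · simp only [hSdef]
        nlinarith [neg_abs_le c, hL1]
      · simp only [hSdef]
        nlinarith [le_abs_self c, hL1]
    have hPS : |P * S| ≤ 4 + |c| + 4*Real.log (1/u) := by
      rw [abs_mul, abs_of_pos hP0]
      calc P * |S| ≤ 1 * |S| := mul_le_mul_of_nonneg_right hP1 (abs_nonneg _)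
        _ = |S| := one_mul _
        _ ≤ _ := hS
    have hE : |(Vf u + c) * P - (u^2)⁻¹| ≤ (11 + |c|) * Real.log (1/u) := by
      rw [hEdecomp]
      calc |((u^2)⁻¹*P - (u^2)⁻¹) + P * S| ≤ |(u^2)⁻¹*P - (u^2)⁻¹| + |P * S| := abs_add_le _ _
        _ ≤ 3 + (4 + |c| + 4*Real.log (1/u)) := by linarith
        _ ≤ (11 + |c|) * Real.log (1/u) := by
            nlinarith [mul_nonneg (abs_nonneg c) (sub_nonneg.mpr hL1)]
    rw [key1, e2r, Real.norm_eq_abs, Real.norm_eq_abs, abs_mul, abs_mul,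
      abs_of_pos hX0, abs_of_nonneg (by linarith : (0:ℝ) ≤ Real.log (1/u))]
    calc (u^2)⁻¹ * |(Vf u + c) * P - (u^2)⁻¹|
        ≤ (u^2)⁻¹ * ((11 + |c|) * Real.log (1/u)) := mul_le_mul_of_nonneg_left hE hX0.le
      _ = (11 + |c|) * ((u^2)⁻¹ * Real.log (1/u)) := by ring
  · rw [Asymptotics.isBigO_iff]
    refine ⟨2*(9 + |c|), ?_⟩
    filter_upwards [Ioo_mem_nhdsLT_of_mem
      (show (1:ℝ) ∈ Set.Ioc (7/8:ℝ) 1 by norm_num)] with u hu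
    obtain ⟨hu78, hu1⟩ := hu
    have hu0 : (0:ℝ) < u := by linarith
    have hu2 : (49:ℝ)/64 < u^2 := by nlinarith
    have hwpos : (0:ℝ) < 1 - u^2 := by nlinarith
    have hwub : 1 - u^2 < 1/4 := by linarith
    have hXu : u^2 * (u^2)⁻¹ = 1 := mul_inv_cancel₀ (by positivity)
    have hX0 : (0:ℝ) < (u^2)⁻¹ := by positivity
    have hX2 : (u^2)⁻¹ ≤ 2 := by nlinarith
    have hwb0 : 0 < (1-u^2) ^ b := Real.rpow_pos_of_pos hwpos b
    have hsplit : (1-u^2) ^ ((1:ℝ)+b) = (1-u^2) ^ b * (1-u^2) := by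
      rw [add_comm, Real.rpow_add hwpos, Real.rpow_one]
    -- log facts
    have hlu_neg : Real.log u < 0 := Real.log_neg hu0 hu1
    have hlu_ge : -1 ≤ Real.log u := by
      have h := Real.log_le_sub_one_of_pos (show (0:ℝ) < u⁻¹ by positivity)
      rw [Real.log_inv] at h
      have hui : u⁻¹ ≤ 8/7 := by
        nlinarith [mul_inv_cancel₀ (ne_of_gt hu0), inv_pos.mpr hu0]
      linarith
    have hM1 : 1 ≤ -Real.log (1-u^2) := by
      have hm : Real.log (1-u^2) ≤ Real.log (1/4:ℝ) := Real.log_le_log hwpos (by linarith)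
      have h4 : Real.log (1/4:ℝ) = -(2 * Real.log 2) := by
        rw [one_div, Real.log_inv, show (4:ℝ) = 2^2 by norm_num, Real.log_pow]
        push_cast; ring
      nlinarith [Real.log_two_gt_d9]
    have hlw_neg : Real.log (1-u^2) < 0 := by linarith
    -- identity
    set S : ℝ := (u^2)⁻¹ - 4*Real.log u + 2*Real.log (1-u^2) + c - 1 with hSdef
    have hid : ζ u + (1-u^2) ^ b = (u^2)⁻¹ * ((1-u^2) ^ b * (1-u^2)) * S := by
      rw [hrep u ⟨hu0, hu1⟩, hsplit]
      simp only [Vf, hSdef]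
      field_simp
      ring
    have hS : |S| ≤ (9 + |c|) * (-Real.log (1-u^2)) := by
      have h1 : |S| ≤ 7 + |c| + 2*(-Real.log (1-u^2)) := by
        rw [abs_le]
        constructor
        · simp only [hSdef]; nlinarith [neg_abs_le c]
        · simp only [hSdef]; nlinarith [le_abs_self c]
      nlinarith [mul_nonneg (abs_nonneg c) (sub_nonneg.mpr hM1)]
    have hQ0 : (0:ℝ) < (1-u^2) ^ b * (1-u^2) := by positivity
    have hsplit' : (1-u^2) ^ (b+1) = (1-u^2) ^ b * (1-u^2) := by
      rw [Real.rpow_add hwpos, Real.rpow_one]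
    have hLHS : |(u^2)⁻¹ * ((1-u^2) ^ b * (1-u^2)) * S|
        = (u^2)⁻¹ * ((1-u^2) ^ b * (1-u^2)) * |S| := by
      rw [abs_mul, abs_of_pos (show (0:ℝ) < (u^2)⁻¹ * ((1-u^2) ^ b * (1-u^2)) by positivity)]
    have hRHS : abs ((1-u^2) ^ (b+1) * |Real.log (1-u^2)|)
        = (1-u^2) ^ b * (1-u^2) * -Real.log (1-u^2) := by
      rw [abs_of_nonneg (by positivity), hsplit', abs_of_neg hlw_neg]
    rw [hid, Real.norm_eq_abs, Real.norm_eq_abs, hLHS, hRHS]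
    calc (u^2)⁻¹ * ((1-u^2) ^ b * (1-u^2)) * |S|
        ≤ 2 * ((1-u^2) ^ b * (1-u^2)) * ((9 + |c|) * (-Real.log (1-u^2))) := by
          apply mul_le_mul (mul_le_mul_of_nonneg_right hX2 hQ0.le) hS (abs_nonneg _)
          positivity
      _ = 2*(9 + |c|) * ((1-u^2) ^ b * (1-u^2) * -Real.log (1-u^2)) := by ring
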